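/- arXiv:2404.04382 — 2 statements merged into one kernel-verified Lean document; each statement's English description precedes it below -/
import Mathlib

section
/- Let n ≥ 1 and let C ⊆ ℝ^{n+1} (Euclidean space) be a Borel-measurable cone (r • C = C for every real r > 0) with H^n(C ∩ B_1(0)) < ∞. Then for every t₀ > 0, ∫_C exp(−‖x‖²/(4t₀)) dH^n(x) = (4πt₀)^{n/2} · H^n(C ∩ B_1(0))/ω_n. In other words, the Gaussian density (4πt₀)^{−n/2} ∫_C exp(−‖x‖²/(4t₀)) dH^n of the cone centered at the origin is independent of t₀ and equals the density Θ(C) = H^n(C ∩ B_1(0))/ω_n of the cone at its vertex. -/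
open MeasureTheory Metric Pointwise

/-- `ω_n`, the volume of the unit ball in `ℝ^n`. -/
noncomputable def unitBallVolume (n : ℕ) : ℝ :=
  Real.pi ^ ((n : ℝ) / 2) / Real.Gamma ((n : ℝ) / 2 + 1)

theorem cone_gaussian_density_eq_density (n : ℕ) (hn : 1 ≤ n)
    (C : Set (EuclideanSpace ℝ (Fin (n + 1))))
    (hC : MeasurableSet C)
    (hcone : ∀ r : ℝ, 0 < r → r • C = C)
    (hfin : μH[n] (C ∩ ball 0 1) < ⊤) :
    ∀ t₀ : ℝ, 0 < t₀ →
      ∫ x in C, Real.exp (-‖x‖ ^ 2 / (4 * t₀)) ∂(μH[n]) =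
        (4 * Real.pi * t₀) ^ ((n : ℝ) / 2) *
          ((μH[n] (C ∩ ball 0 1)).toReal / unitBallVolume n) := by
  intro t₀ ht₀
  set μ : Measure (EuclideanSpace ℝ (Fin (n + 1))) := μH[n] with hμ
  set m : ENNReal := μ (C ∩ ball 0 1) with hm
  -- scaling of the cone measure
  have hscale : ∀ r : ℝ, 0 < r → μ (C ∩ ball 0 r) = ENNReal.ofReal r ^ n * m := by
    intro r hr
    have h1 : C ∩ ball 0 r = r • (C ∩ ball 0 1) := by
      rw [Set.smul_set_inter₀ hr.ne', hcone r hr, smul_unitBall_of_pos hr]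
    rw [hm, hμ, h1, MeasureTheory.Measure.hausdorffMeasure_smul₀ (by positivity : (0:ℝ) ≤ n)
      hr.ne']
    congr 1
    rw [Real.nnnorm_of_nonneg hr.le, NNReal.rpow_natCast]
    congr 1
    ext
    simp [Real.coe_toNNReal _ hr.le]
  -- sigma-finiteness of μ restricted to C
  haveI hsf : SigmaFinite (μ.restrict C) := by
    constructor
    refine ⟨⟨fun k => ball 0 (k + 1) ∪ Cᶜ, fun _ => trivial, fun k => ?_, ?_⟩⟩
    · refine lt_of_le_of_lt (measure_union_le _ _) ?_
      have h1 : μ.restrict C (ball 0 (k + 1)) = μ (C ∩ ball 0 (k + 1)) := by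
        rw [Measure.restrict_apply measurableSet_ball, Set.inter_comm]
      have h2 : μ.restrict C (Cᶜ) = 0 := by
        rw [Measure.restrict_apply hC.compl, Set.compl_inter_self, measure_empty]
      rw [h1, h2, add_zero, hscale _ (by positivity)]
      exact ENNReal.mul_lt_top (ENNReal.pow_lt_top ENNReal.ofReal_lt_top) hfin
    · apply Set.eq_univ_of_forall
      intro x
      obtain ⟨k, hk⟩ := exists_nat_gt ‖x‖
      exact Set.mem_iUnion.mpr ⟨k, Or.inl (mem_ball_zero_iff.mpr (hk.trans (by norm_num)))⟩
  set a : EuclideanSpace ℝ (Fin (n + 1)) → ℝ := fun x => ‖x‖ ^ 2 / (4 * t₀) with ha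
  have ha_cont : Continuous a := (continuous_norm.pow 2).div_const _
  have ha_nonneg : ∀ x, 0 ≤ a x := fun x => by positivity
  have hball : ∀ u : ℝ, 0 < u → {x | a x < u} = ball 0 (Real.sqrt (4 * t₀ * u)) := by
    intro u hu
    ext x
    simp only [Set.mem_setOf_eq, mem_ball_zero_iff, ha]
    rw [div_lt_iff₀ (by positivity), Real.lt_sqrt (norm_nonneg x)]
    rw [mul_comm u (4 * t₀)]
  set G : EuclideanSpace ℝ (Fin (n + 1)) → ℝ → ENNReal := fun x u =>
    if a x < u then ENNReal.ofReal (Real.exp (-u)) else 0 with hG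
  have hexp_int : ∀ c : ℝ, IntegrableOn (fun u => Real.exp (-u)) (Set.Ioi c) := by
    intro c
    simpa using exp_neg_integrableOn_Ioi c one_pos
  -- pointwise layer representation
  have hpt : ∀ x, ENNReal.ofReal (Real.exp (-‖x‖ ^ 2 / (4 * t₀))) =
      ∫⁻ u in Set.Ioi (0 : ℝ), G x u := by
    intro x
    have h1 : ∀ u : ℝ, G x u = (Set.Ioi (a x)).indicator
        (fun u => ENNReal.ofReal (Real.exp (-u))) u := by
      intro u
      simp [hG, Set.indicator_apply, Set.mem_Ioi]
    simp_rw [h1]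
    rw [lintegral_indicator measurableSet_Ioi, Measure.restrict_restrict measurableSet_Ioi,
      Set.inter_eq_left.mpr (Set.Ioi_subset_Ioi (ha_nonneg x)),
      ← ofReal_integral_eq_lintegral_ofReal (hexp_int (a x))
        (Filter.Eventually.of_forall fun u => (Real.exp_pos _).le),
      integral_exp_neg_Ioi]
    congr 1
    rw [ha, neg_div]
  -- measurability of the uncurried kernel
  have hGmeas : AEMeasurable (Function.uncurry G)
      ((μ.restrict C).prod (volume.restrict (Set.Ioi (0 : ℝ)))) := by
    apply Measurable.aemeasurable
    apply Measurable.ite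
    · exact measurableSet_lt (ha_cont.measurable.comp measurable_fst) measurable_snd
    · exact (measurable_snd.neg.exp).ennreal_ofReal
    · exact measurable_const
  -- the main lintegral computation
  have key : ∫⁻ x in C, ENNReal.ofReal (Real.exp (-‖x‖ ^ 2 / (4 * t₀))) ∂μ =
      m * ENNReal.ofReal ((4 * t₀) ^ ((n : ℝ) / 2) * Real.Gamma ((n : ℝ) / 2 + 1)) := by
    calc ∫⁻ x in C, ENNReal.ofReal (Real.exp (-‖x‖ ^ 2 / (4 * t₀))) ∂μ
        = ∫⁻ x in C, ∫⁻ u in Set.Ioi (0 : ℝ), G x u ∂volume ∂μ := by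
          exact lintegral_congr fun x => hpt x
      _ = ∫⁻ u in Set.Ioi (0 : ℝ), ∫⁻ x in C, G x u ∂μ ∂volume :=
          lintegral_lintegral_swap hGmeas
      _ = ∫⁻ u in Set.Ioi (0 : ℝ),
            ENNReal.ofReal (Real.exp (-u)) * (μ.restrict C) {x | a x < u} ∂volume := by
          apply lintegral_congr fun u => ?_
          have h2 : ∀ x, G x u = ({x | a x < u}).indicator
              (fun _ => ENNReal.ofReal (Real.exp (-u))) x := by
            intro x; simp [hG, Set.indicator_apply]
          have hms : MeasurableSet {x | a x < u} :=
            measurableSet_lt ha_cont.measurable measurable_const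
          simp_rw [h2]
          rw [lintegral_indicator_const hms]
      _ = ∫⁻ u in Set.Ioi (0 : ℝ),
            ENNReal.ofReal (Real.exp (-u) * Real.sqrt (4 * t₀ * u) ^ n) * m ∂volume := by
          apply setLIntegral_congr_fun measurableSet_Ioi
          intro u hu
          beta_reduce
          rw [Measure.restrict_apply' hC, hball u hu, Set.inter_comm,
            hscale _ (Real.sqrt_pos.mpr (mul_pos (by positivity) (Set.mem_Ioi.mp hu))),
            ENNReal.ofReal_mul (Real.exp_pos _).le, ENNReal.ofReal_pow (Real.sqrt_nonneg _)]
          ring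
      _ = (∫⁻ u in Set.Ioi (0 : ℝ),
            ENNReal.ofReal (Real.exp (-u) * Real.sqrt (4 * t₀ * u) ^ n) ∂volume) * m := by
          rw [lintegral_mul_const']
          exact hfin.ne
      _ = m * ENNReal.ofReal ((4 * t₀) ^ ((n : ℝ) / 2) * Real.Gamma ((n : ℝ) / 2 + 1)) := by
          rw [mul_comm]
          congr 1
          have hpow : ∀ u : ℝ, 0 < u →
              Real.exp (-u) * Real.sqrt (4 * t₀ * u) ^ n =
              (4 * t₀) ^ ((n : ℝ) / 2) * (Real.exp (-u) * u ^ ((n : ℝ) / 2 + 1 - 1)) := by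
            intro u hu
            have h4 : (0:ℝ) ≤ 4 * t₀ := by positivity
            rw [Real.sqrt_eq_rpow, ← Real.rpow_natCast ((4 * t₀ * u) ^ ((1:ℝ)/2)) n,
              ← Real.rpow_mul (by positivity), Real.mul_rpow h4 hu.le]
            ring_nf
          have hint : IntegrableOn
              (fun u => Real.exp (-u) * Real.sqrt (4 * t₀ * u) ^ n) (Set.Ioi (0:ℝ)) := by
            have h5 := (Real.GammaIntegral_convergent
              (by positivity : (0:ℝ) < (n : ℝ) / 2 + 1)).const_mul ((4 * t₀) ^ ((n : ℝ) / 2))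
            exact IntegrableOn.congr_fun h5 (fun u hu => (hpow u hu).symm) measurableSet_Ioi
          rw [← ofReal_integral_eq_lintegral_ofReal hint
            (by
              filter_upwards [self_mem_ae_restrict measurableSet_Ioi] with u hu
              positivity)]
          congr 1
          rw [setIntegral_congr_fun measurableSet_Ioi (fun u hu => hpow u hu),
            integral_const_mul, Real.Gamma_eq_integral (by positivity : (0:ℝ) < (n : ℝ) / 2 + 1)]
  -- convert to the Bochner integral and conclude
  have hmble : AEStronglyMeasurable (fun x : EuclideanSpace ℝ (Fin (n + 1)) =>
      Real.exp (-‖x‖ ^ 2 / (4 * t₀))) (μ.restrict C) :=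
    (Real.continuous_exp.comp ((continuous_norm.pow 2).neg.div_const _)).aestronglyMeasurable
  rw [integral_eq_lintegral_of_nonneg_ae
      (Filter.Eventually.of_forall fun x => (Real.exp_pos _).le) hmble, key,
    ENNReal.toReal_mul, ENNReal.toReal_ofReal (by positivity)]
  have hΓ : 0 < Real.Gamma ((n : ℝ) / 2 + 1) := Real.Gamma_pos_of_pos (by positivity)
  have hπ : (0:ℝ) < Real.pi ^ ((n : ℝ) / 2) := Real.rpow_pos_of_pos Real.pi_pos _
  have h4πt : (4 * Real.pi * t₀) ^ ((n : ℝ) / 2) =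
      (4 * t₀) ^ ((n : ℝ) / 2) * Real.pi ^ ((n : ℝ) / 2) := by
    rw [← Real.mul_rpow (by positivity) Real.pi_pos.le]
    ring_nf
  rw [unitBallVolume, h4πt]
  field_simp
end

section
/- Let n ≥ 1 and let C ⊆ ℝ^{n+1} (Euclidean space) be a Borel-measurable cone (r • C = C for every real r > 0) with H^n(C ∩ B_1(0)) < ∞. Then the Colding–Minicozzi entropy of C is at least its density at the vertex: λ(C) ≥ Θ(C) = H^n(C ∩ B_1(0))/ω_n. -/
open MeasureTheory Metric Pointwise ENNReal

/-- The Colding–Minicozzi entropy of a set `S ⊆ ℝ^{n+1}`, a supremum in `[0,∞]`. -/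
noncomputable def entropy (n : ℕ) (S : Set (EuclideanSpace ℝ (Fin (n + 1)))) : ℝ≥0∞ :=
  ⨆ (x₀ : EuclideanSpace ℝ (Fin (n + 1))) (t₀ : ℝ) (_ : 0 < t₀),
    ENNReal.ofReal ((4 * Real.pi * t₀) ^ (-(n : ℝ) / 2)) *
      ∫⁻ x in S, ENNReal.ofReal (Real.exp (-‖x - x₀‖ ^ 2 / (4 * t₀))) ∂(μH[n])

section Aux

open Set

variable {n : ℕ} {C : Set (EuclideanSpace ℝ (Fin (n + 1)))}

lemma cone_scaling (hcone : ∀ r : ℝ, 0 < r → r • C = C) {r : ℝ} (hr : 0 < r) :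
    μH[n] (C ∩ ball 0 r) = ENNReal.ofReal (r ^ n) * μH[n] (C ∩ ball 0 1) := by
  have h1 : C ∩ ball 0 r = r • (C ∩ ball 0 1) := by
    rw [Set.smul_set_inter₀ hr.ne', hcone r hr, smul_unitBall_of_pos hr]
  rw [h1, Measure.hausdorffMeasure_smul₀ (by positivity) hr.ne']
  congr 1
  ext
  rw [NNReal.rpow_natCast]
  push_cast
  rw [Real.norm_of_nonneg hr.le, Real.coe_toNNReal _ (by positivity)]

lemma gamma_lintegral (n : ℕ) :
    ∫⁻ u in Ioi (0:ℝ), ENNReal.ofReal (Real.exp (-u) * u ^ ((n:ℝ)/2)) =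
      ENNReal.ofReal (Real.Gamma ((n:ℝ)/2 + 1)) := by
  rw [← ofReal_integral_eq_lintegral_ofReal]
  · rw [Real.Gamma_eq_integral (by positivity : (0:ℝ) < (n:ℝ)/2 + 1), add_sub_cancel_right]
  · simpa [add_sub_cancel_right, IntegrableOn] using Real.GammaIntegral_convergent
      (s := (n:ℝ)/2 + 1) (by positivity)
  · filter_upwards [ae_restrict_mem measurableSet_Ioi] with u hu
    exact mul_nonneg (Real.exp_nonneg _) (Real.rpow_nonneg hu.le _)

lemma cone_gauss (hC : MeasurableSet C) (hcone : ∀ r : ℝ, 0 < r → r • C = C)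
    (hfin : μH[n] (C ∩ ball 0 1) < ⊤) :
    ∫⁻ x in C, ENNReal.ofReal (Real.exp (-‖x‖ ^ 2 / 4)) ∂(μH[n]) =
      ENNReal.ofReal (2 ^ n * Real.Gamma ((n:ℝ)/2 + 1)) * μH[n] (C ∩ ball 0 1) := by
  set μ : Measure (EuclideanSpace ℝ (Fin (n+1))) := μH[n] with hμ
  set m := μ (C ∩ ball 0 1) with hm
  have f_cont : Continuous fun x : EuclideanSpace ℝ (Fin (n+1)) =>
      Real.exp (-‖x‖ ^ 2 / 4) := by fun_prop
  have meas_set : ∀ t : ℝ, MeasurableSet {x : EuclideanSpace ℝ (Fin (n+1)) |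
      t < Real.exp (-‖x‖ ^ 2 / 4)} :=
    fun t => measurableSet_lt measurable_const f_cont.measurable
  -- layer cake
  rw [lintegral_eq_lintegral_meas_lt (μ.restrict C)
    (Filter.Eventually.of_forall fun x => (Real.exp_pos _).le) f_cont.aemeasurable]
  have hres : ∀ t : ℝ, (μ.restrict C) {x | t < Real.exp (-‖x‖ ^ 2 / 4)} =
      μ (C ∩ {x | t < Real.exp (-‖x‖ ^ 2 / 4)}) := by
    intro t
    rw [Measure.restrict_apply (meas_set t), Set.inter_comm]
  -- split the t-integral
  have hsplit : Ioi (0:ℝ) = Ioo 0 1 ∪ Ici 1 := (Set.Ioo_union_Ici_eq_Ioi one_pos).symm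
  have hdisj : Disjoint (Ioo (0:ℝ) 1) (Ici 1) := by
    rw [Set.disjoint_left]
    rintro t ⟨_, h1⟩ h2
    exact absurd h2 (not_le.mpr h1)
  rw [hsplit, lintegral_union measurableSet_Ici hdisj]
  have hzero : ∫⁻ t in Ici (1:ℝ), (μ.restrict C) {x | t < Real.exp (-‖x‖ ^ 2 / 4)} = 0 := by
    rw [setLIntegral_congr_fun_ae measurableSet_Ici (ae_of_all _ fun t ht => ?_), lintegral_zero]
    have : {x : EuclideanSpace ℝ (Fin (n+1)) | t < Real.exp (-‖x‖ ^ 2 / 4)} = ∅ := by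
      ext x
      simp only [mem_setOf_eq, mem_empty_iff_false, iff_false, not_lt]
      calc Real.exp (-‖x‖ ^ 2 / 4) ≤ 1 :=
            Real.exp_le_one_iff.mpr (by nlinarith [sq_nonneg ‖x‖])
        _ ≤ t := ht
    rw [this]
    simp
  rw [hzero, add_zero]
  -- on (0,1), the superlevel set is a ball
  have hball : ∀ t ∈ Ioo (0:ℝ) 1,
      (μ.restrict C) {x | t < Real.exp (-‖x‖ ^ 2 / 4)} =
        ENNReal.ofReal ((2 * Real.sqrt (-Real.log t)) ^ n) * m := by
    rintro t ⟨h0, h1⟩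
    have hlogpos : 0 < -Real.log t := by simpa using Real.log_neg h0 h1
    have hset : {x : EuclideanSpace ℝ (Fin (n+1)) | t < Real.exp (-‖x‖ ^ 2 / 4)} =
        ball 0 (2 * Real.sqrt (-Real.log t)) := by
      ext x
      simp only [mem_setOf_eq, mem_ball_zero_iff]
      rw [show (2:ℝ) * Real.sqrt (-Real.log t) = Real.sqrt (4 * (-Real.log t)) by
          rw [show (4:ℝ) * (-Real.log t) = 2 ^ 2 * (-Real.log t) by ring,
            Real.sqrt_mul (by positivity), Real.sqrt_sq (by norm_num)],
        Real.lt_sqrt (norm_nonneg x), ← Real.log_lt_iff_lt_exp h0]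
      constructor <;> intro h <;> linarith
    rw [hres t, hset, cone_scaling hcone (by positivity)]
  rw [setLIntegral_congr_fun_ae measurableSet_Ioo (ae_of_all _ hball)]
  -- change of variables t = exp (-u)
  have himg : (fun u : ℝ => Real.exp (-u)) '' Ioi 0 = Ioo 0 1 := by
    ext t
    constructor
    · rintro ⟨u, hu, rfl⟩
      exact ⟨Real.exp_pos _, Real.exp_lt_one_iff.mpr (by simpa using hu)⟩
    · rintro ⟨h0, h1⟩
      exact ⟨-Real.log t, by simpa using Real.log_neg h0 h1, by simp [Real.exp_log h0]⟩
  have hder : ∀ u ∈ Ioi (0:ℝ), HasFDerivWithinAt (fun u : ℝ => Real.exp (-u))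
      ((1 : ℝ →L[ℝ] ℝ).smulRight (-Real.exp (-u))) (Ioi 0) u := by
    intro u _
    have h : HasDerivAt (fun u : ℝ => Real.exp (-u)) (-Real.exp (-u)) u := by
      simpa [Function.comp_def] using (Real.hasDerivAt_exp (-u)).comp u ((hasDerivAt_id u).neg)
    exact h.hasDerivWithinAt.hasFDerivWithinAt
  have hinj : InjOn (fun u : ℝ => Real.exp (-u)) (Ioi 0) := by
    intro a _ b _ h
    simpa using Real.exp_injective h
  have cov := lintegral_image_eq_lintegral_abs_det_fderiv_mul volume measurableSet_Ioi
    hder hinj (fun t => ENNReal.ofReal ((2 * Real.sqrt (-Real.log t)) ^ n) * m)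
  rw [himg] at cov
  rw [cov]
  simp only [ContinuousLinearMap.smulRight_one_eq_toSpanSingleton, ContinuousLinearMap.det_toSpanSingleton, abs_neg, abs_of_pos (Real.exp_pos _), Real.log_exp, neg_neg]
  -- simplify integrand
  have hintegrand : ∀ u ∈ Ioi (0:ℝ),
      ENNReal.ofReal (Real.exp (-u)) * (ENNReal.ofReal ((2 * Real.sqrt u) ^ n) * m) =
        (ENNReal.ofReal ((2:ℝ) ^ n) * m) * ENNReal.ofReal (Real.exp (-u) * u ^ ((n:ℝ)/2)) := by
    intro u hu
    have hu' : (0:ℝ) ≤ u := le_of_lt hu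
    have hsq : Real.sqrt u ^ n = u ^ ((n:ℝ)/2) := by
      rw [Real.sqrt_eq_rpow, ← Real.rpow_natCast (u ^ ((1:ℝ)/2)) n, ← Real.rpow_mul hu']
      congr 1
      ring
    rw [mul_pow, hsq,
      show ENNReal.ofReal ((2:ℝ) ^ n * u ^ ((n:ℝ)/2)) =
        ENNReal.ofReal ((2:ℝ) ^ n) * ENNReal.ofReal (u ^ ((n:ℝ)/2)) from
        ENNReal.ofReal_mul (by positivity),
      show ENNReal.ofReal (Real.exp (-u) * u ^ ((n:ℝ)/2)) =
        ENNReal.ofReal (Real.exp (-u)) * ENNReal.ofReal (u ^ ((n:ℝ)/2)) from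
        ENNReal.ofReal_mul (Real.exp_nonneg _)]
    ring
  rw [setLIntegral_congr_fun_ae measurableSet_Ioi (ae_of_all _ hintegrand),
    lintegral_const_mul' _ _ (by exact ENNReal.mul_ne_top ENNReal.ofReal_ne_top hfin.ne),
    gamma_lintegral n, ENNReal.ofReal_mul (by positivity)]
  ring

end Aux

theorem entropy_ge_density (n : ℕ) (hn : 1 ≤ n)
    (C : Set (EuclideanSpace ℝ (Fin (n + 1))))
    (hC : MeasurableSet C)
    (hcone : ∀ r : ℝ, 0 < r → r • C = C)
    (hfin : μH[n] (C ∩ ball 0 1) < ⊤) :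
    ENNReal.ofReal ((μH[n] (C ∩ ball 0 1)).toReal / unitBallVolume n) ≤ entropy n C := by
  set m := μH[n] (C ∩ ball 0 1) with hm
  have hΓ : 0 < Real.Gamma ((n:ℝ)/2 + 1) := Real.Gamma_pos_of_pos (by positivity)
  have hπ : 0 < Real.pi := Real.pi_pos
  rw [entropy]
  refine le_trans ?_ (le_iSup_of_le (0 : EuclideanSpace ℝ (Fin (n + 1)))
    (le_iSup_of_le (1 : ℝ) (le_iSup_of_le one_pos le_rfl)))
  simp only [sub_zero, mul_one]
  rw [cone_gauss hC hcone hfin, ← hm, ← ENNReal.ofReal_toReal hfin.ne,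
    ENNReal.toReal_ofReal ENNReal.toReal_nonneg]
  rw [← ENNReal.ofReal_mul (mul_nonneg (by positivity) hΓ.le),
    ← ENNReal.ofReal_mul (by positivity)]
  apply ENNReal.ofReal_le_ofReal
  apply le_of_eq
  have h4 : (4 * Real.pi) ^ (-(n:ℝ)/2) =
      ((2:ℝ) ^ n * Real.pi ^ ((n:ℝ)/2))⁻¹ := by
    rw [neg_div, Real.rpow_neg (by positivity), Real.mul_rpow (by norm_num) hπ.le]
    congr 2
    rw [show (4:ℝ) = (2:ℝ) ^ (2:ℕ) by norm_num, ← Real.rpow_natCast (2:ℝ) 2,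
      ← Real.rpow_mul (by norm_num), ← Real.rpow_natCast (2:ℝ) n]
    congr 1
    push_cast
    ring
  rw [unitBallVolume, h4]
  have hπn : (0:ℝ) < Real.pi ^ ((n:ℝ)/2) := Real.rpow_pos_of_pos hπ _
  field_simp
end
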